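/- Cauchy estimate on an annulus: let ρ > 1, 0 < t < 1, and c > 0. Let A be a matrix-valued function, continuous on the closed annulus {z ∈ ℂ : ρ⁻¹t ≤ |z| ≤ ρ} and holomorphic on its interior, such that the line integral of ‖A‖ over the circle |z| = ρ is at most c, and the line integral of ‖A‖ over the circle |z| = ρ⁻¹t is at most c·t. Then for every z with t ≤ |z| ≤ 1, ‖A(z)‖ ≤ (1/(2π)) · ( c/(ρ − 1) + c/(1 − ρ⁻¹) ). -/

import Mathlib

attribute [local instance] Matrix.linftyOpNormedAddCommGroup Matrix.linftyOpNormedRing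
  Matrix.linftyOpNormedSpace

/-- Cauchy estimate on the annulus `ρ⁻¹ t ≤ |z| ≤ ρ` for a
holomorphic matrix-valued map whose norm has small line integrals on the two
boundary circles. -/
theorem cauchy_estimate_on_annulus (d : ℕ) (ρ t c : ℝ)
    (hρ : 1 < ρ) (ht0 : 0 < t) (ht1 : t < 1) (hc : 0 < c)
    (A : ℂ → Matrix (Fin d) (Fin d) ℂ)
    (hcont : ContinuousOn A {z : ℂ | ρ⁻¹ * t ≤ ‖z‖ ∧ ‖z‖ ≤ ρ})
    (hholo : DifferentiableOn ℂ A
      {z : ℂ | ρ⁻¹ * t < ‖z‖ ∧ ‖z‖ < ρ})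
    (houter : (∫ θ in (0:ℝ)..(2 * Real.pi),
        ‖A ((ρ : ℂ) * Complex.exp (θ * Complex.I))‖ * ρ) ≤ c)
    (hinner : (∫ θ in (0:ℝ)..(2 * Real.pi),
        ‖A (((ρ⁻¹ * t : ℝ) : ℂ) * Complex.exp (θ * Complex.I))‖ * (ρ⁻¹ * t)) ≤ c * t) :
    ∀ z : ℂ, t ≤ ‖z‖ → ‖z‖ ≤ 1 →
      ‖A z‖ ≤ (1 / (2 * Real.pi)) * (c / (ρ - 1) + c / (1 - ρ⁻¹)) := by

  intro w hw1 hw2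
  have hπ := Real.pi_pos
  have h2π := Real.two_pi_pos
  have hρ0 : (0:ℝ) < ρ := lt_trans one_pos hρ
  have hρinv1 : ρ⁻¹ < 1 := by
    rw [inv_lt_one_iff₀]; right; exact hρ
  have hρinv0 : (0:ℝ) < ρ⁻¹ := inv_pos.2 hρ0
  set r : ℝ := ρ⁻¹ * t with hr_def
  have hr0 : 0 < r := mul_pos hρinv0 ht0
  have hrt : r < t := by
    calc r = ρ⁻¹ * t := rfl
    _ < 1 * t := mul_lt_mul_of_pos_right hρinv1 ht0
    _ = t := one_mul t
  have hrw : r < ‖w‖ := lt_of_lt_of_le hrt hw1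
  have hwρ : ‖w‖ < ρ := lt_of_le_of_lt hw2 hρ
  have hrρ : r ≤ ρ := le_of_lt (lt_trans hrw hwρ)
  have habs0 : (0:ℝ) ≤ ‖w‖ := norm_nonneg w
  -- the sets as metric balls
  have hset1 : Metric.closedBall (0:ℂ) ρ \ Metric.ball 0 r
      = {z : ℂ | r ≤ ‖z‖ ∧ ‖z‖ ≤ ρ} := by
    ext z
    simp only [Set.mem_diff, Metric.mem_closedBall, Metric.mem_ball, Complex.dist_eq, sub_zero,
      not_lt, Set.mem_setOf_eq]
    tauto
  have hset2 : Metric.ball (0:ℂ) ρ \ Metric.closedBall 0 r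
      = {z : ℂ | r < ‖z‖ ∧ ‖z‖ < ρ} := by
    ext z
    simp only [Set.mem_diff, Metric.mem_closedBall, Metric.mem_ball, Complex.dist_eq, sub_zero,
      not_le, Set.mem_setOf_eq]
    tauto
  have hcontB : ContinuousOn A (Metric.closedBall (0:ℂ) ρ \ Metric.ball 0 r) := by
    rw [hset1]; exact hcont
  have hopen : IsOpen {z : ℂ | r < ‖z‖ ∧ ‖z‖ < ρ} := by
    rw [← hset2]; exact Metric.isOpen_ball.sdiff Metric.isClosed_closedBall
  have hdA : ∀ z ∈ {z : ℂ | r < ‖z‖ ∧ ‖z‖ < ρ}, DifferentiableAt ℂ A z :=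
    fun z hz => hholo.differentiableAt (hopen.mem_nhds hz)
  have hwmem : w ∈ {z : ℂ | r < ‖z‖ ∧ ‖z‖ < ρ} := ⟨hrw, hwρ⟩
  -- the dslope function
  set F : ℂ → Matrix (Fin d) (Fin d) ℂ := dslope A w with hF_def
  have hcF : ContinuousOn F (Metric.closedBall (0:ℂ) ρ \ Metric.ball 0 r) := by
    intro z hz
    rcases eq_or_ne z w with rfl | hne
    · exact ((continuousAt_dslope_same.2 (hdA z hwmem))).continuousWithinAt
    · exact (continuousWithinAt_dslope_of_ne hne).2 (hcontB z hz)
  have hdF : ∀ z ∈ (Metric.ball (0:ℂ) ρ \ Metric.closedBall 0 r) \ ({w} : Set ℂ),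
      DifferentiableAt ℂ F z := by
    intro z hz
    have hne : z ≠ w := by simpa using hz.2
    exact (differentiableAt_dslope_of_ne hne).2 (hdA z (hset2 ▸ hz.1))
  have hFeq := Complex.circleIntegral_eq_of_differentiable_on_annulus_off_countable hr0 hrρ
    (Set.countable_singleton w) hcF hdF
  -- spheres are inside the annulus and avoid w
  have hsphρ : ∀ z ∈ Metric.sphere (0:ℂ) ρ, ‖z‖ = ρ := by
    intro z hz; simpa [Complex.dist_eq] using hz
  have hsphr : ∀ z ∈ Metric.sphere (0:ℂ) r, ‖z‖ = r := by
    intro z hz; simpa [Complex.dist_eq] using hz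
  have hneρ : ∀ z ∈ Metric.sphere (0:ℂ) ρ, z ≠ w := by
    intro z hz h
    rw [h] at hz
    exact absurd (hsphρ w hz) (ne_of_lt hwρ)
  have hner : ∀ z ∈ Metric.sphere (0:ℂ) r, z ≠ w := by
    intro z hz h
    rw [h] at hz
    exact absurd (hsphr w hz) (ne_of_gt hrw)
  -- integrability
  have hcinvρ : ContinuousOn (fun z : ℂ => (z - w)⁻¹) (Metric.sphere (0:ℂ) ρ) :=
    (continuousOn_id.sub continuousOn_const).inv₀ fun z hz => sub_ne_zero.2 (hneρ z hz)
  have hcinvr : ContinuousOn (fun z : ℂ => (z - w)⁻¹) (Metric.sphere (0:ℂ) r) :=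
    (continuousOn_id.sub continuousOn_const).inv₀ fun z hz => sub_ne_zero.2 (hner z hz)
  have hAsphρ : ContinuousOn A (Metric.sphere (0:ℂ) ρ) := by
    refine hcontB.mono fun z hz => ?_
    rw [hset1]; exact ⟨(hsphρ z hz).symm ▸ hrρ, le_of_eq (hsphρ z hz)⟩
  have hAsphr : ContinuousOn A (Metric.sphere (0:ℂ) r) := by
    refine hcontB.mono fun z hz => ?_
    rw [hset1]; exact ⟨le_of_eq (hsphr z hz).symm, (hsphr z hz).symm ▸ hrρ⟩
  have hint1ρ : CircleIntegrable (fun z => (z - w)⁻¹ • A z) 0 ρ :=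
    (hcinvρ.smul hAsphρ).circleIntegrable hρ0.le
  have hint2ρ : CircleIntegrable (fun z : ℂ => (z - w)⁻¹ • A w) 0 ρ :=
    (hcinvρ.smul continuousOn_const).circleIntegrable hρ0.le
  have hint1r : CircleIntegrable (fun z => (z - w)⁻¹ • A z) 0 r :=
    (hcinvr.smul hAsphr).circleIntegrable hr0.le
  have hint2r : CircleIntegrable (fun z : ℂ => (z - w)⁻¹ • A w) 0 r :=
    (hcinvr.smul continuousOn_const).circleIntegrable hr0.le
  -- F on spheres
  have hFsph : ∀ R : ℝ, ∀ z ∈ Metric.sphere (0:ℂ) R, z ≠ w →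
      F z = (z - w)⁻¹ • A z - (z - w)⁻¹ • A w := by
    intro R z _ hne
    rw [hF_def, dslope_of_ne _ hne, slope_def_module, smul_sub]
  have hFρ : (∮ z in C(0, ρ), F z)
      = (∮ z in C(0, ρ), (z - w)⁻¹ • A z) - (2 * Real.pi * Complex.I) • A w := by
    rw [circleIntegral.integral_congr hρ0.le
        (fun z hz => hFsph ρ z hz (hneρ z hz)),
      circleIntegral.integral_sub hint1ρ hint2ρ, circleIntegral.integral_smul_const,
      circleIntegral.integral_sub_inv_of_mem_ball (by simpa [Complex.dist_eq] using hwρ)]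
  have hzero : (∮ z in C(0, r), (z - w)⁻¹) = 0 := by
    refine Complex.circleIntegral_eq_zero_of_differentiable_on_off_countable hr0.le
      Set.countable_empty ?_ ?_
    · refine (continuousOn_id.sub continuousOn_const).inv₀ fun z hz => sub_ne_zero.2 ?_
      intro h
      simp only [id_eq] at h
      have : ‖z‖ ≤ r := by simpa [Complex.dist_eq] using hz
      rw [h] at this
      exact absurd this (not_le.2 hrw)
    · intro z hz
      have hzr : ‖z‖ < r := by
        simpa [Complex.dist_eq] using hz.1
      refine (differentiableAt_id.sub_const w).inv (sub_ne_zero.2 ?_)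
      intro h
      simp only [id_eq] at h
      rw [h] at hzr
      exact absurd hzr (not_lt.2 hrw.le)
  have hFr : (∮ z in C(0, r), F z) = ∮ z in C(0, r), (z - w)⁻¹ • A z := by
    rw [circleIntegral.integral_congr hr0.le
        (fun z hz => hFsph r z hz (hner z hz)),
      circleIntegral.integral_sub hint1r hint2r, circleIntegral.integral_smul_const,
      hzero, zero_smul, sub_zero]
  have hkey : (2 * Real.pi * Complex.I) • A w
      = (∮ z in C(0, ρ), (z - w)⁻¹ • A z) - ∮ z in C(0, r), (z - w)⁻¹ • A z := by
    rw [hFρ, hFr] at hFeq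
    rw [eq_sub_iff_add_eq, ← hFeq]
    abel
  -- bound the outer integral
  have hρ1 : (0:ℝ) < ρ - 1 := sub_pos.2 hρ
  have key1 : ‖∮ z in C(0, ρ), (z - w)⁻¹ • A z‖ ≤ c / (ρ - 1) := by
    have hmapρ : ∀ θ : ℝ, circleMap 0 ρ θ ∈
        {z : ℂ | r ≤ ‖z‖ ∧ ‖z‖ ≤ ρ} := by
      intro θ
      have : ‖circleMap 0 ρ θ‖ = ρ := by
        simpa [abs_of_pos hρ0] using norm_circleMap_zero ρ θ
      exact ⟨this.symm ▸ hrρ, le_of_eq this⟩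
    have hgcont : ContinuousOn (fun θ : ℝ => ‖A (circleMap 0 ρ θ)‖ * ρ * (ρ - 1)⁻¹)
        (Set.uIcc 0 (2 * Real.pi)) :=
      (((hcont.comp (continuous_circleMap 0 ρ).continuousOn
        fun θ _ => hmapρ θ).norm.mul continuousOn_const).mul continuousOn_const)
    have hgint : IntervalIntegrable (fun θ : ℝ => ‖A (circleMap 0 ρ θ)‖ * ρ * (ρ - 1)⁻¹)
        MeasureTheory.volume 0 (2 * Real.pi) := hgcont.intervalIntegrable
    rw [circleIntegral]
    refine le_trans (intervalIntegral.norm_integral_le_of_norm_le h2π.le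
      (MeasureTheory.ae_of_all _ fun θ _ => ?_) hgint) ?_
    · -- pointwise bound
      have hz := hmapρ θ
      have habsz : ‖circleMap 0 ρ θ‖ = ρ := by
        simpa [abs_of_pos hρ0] using norm_circleMap_zero ρ θ
      have hd : ρ - 1 ≤ ‖circleMap 0 ρ θ - w‖ := by
        have h := norm_sub_norm_le (circleMap 0 ρ θ) w
        rw [habsz] at h
        linarith
      have hdpos : (0:ℝ) < ‖circleMap 0 ρ θ - w‖ := lt_of_lt_of_le hρ1 hd
      have hinv : (‖circleMap 0 ρ θ - w‖)⁻¹ ≤ (ρ - 1)⁻¹ :=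
        inv_anti₀ hρ1 hd
      rw [norm_smul, norm_smul, deriv_circleMap]
      have h1 : ‖circleMap 0 ρ θ * Complex.I‖ = ρ := by
        simp [habsz]
      have h2 : ‖(circleMap 0 ρ θ - w)⁻¹‖ = (‖circleMap 0 ρ θ - w‖)⁻¹ := by
        simp
      rw [h1, h2]
      have hn : (0:ℝ) ≤ ‖A (circleMap 0 ρ θ)‖ := norm_nonneg _
      calc ρ * ((‖circleMap 0 ρ θ - w‖)⁻¹ * ‖A (circleMap 0 ρ θ)‖)
          ≤ ρ * ((ρ - 1)⁻¹ * ‖A (circleMap 0 ρ θ)‖) := by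
            exact mul_le_mul_of_nonneg_left (mul_le_mul_of_nonneg_right hinv hn) hρ0.le
        _ = ‖A (circleMap 0 ρ θ)‖ * ρ * (ρ - 1)⁻¹ := by ring
    · -- integral of the bound
      have hEq : (∫ θ in (0:ℝ)..(2 * Real.pi), ‖A (circleMap 0 ρ θ)‖ * ρ * (ρ - 1)⁻¹)
          = (∫ θ in (0:ℝ)..(2 * Real.pi), ‖A (circleMap 0 ρ θ)‖ * ρ) * (ρ - 1)⁻¹ := by
        rw [← intervalIntegral.integral_mul_const]
      have hEq2 : (∫ θ in (0:ℝ)..(2 * Real.pi), ‖A (circleMap 0 ρ θ)‖ * ρ)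
          = ∫ θ in (0:ℝ)..(2 * Real.pi), ‖A ((ρ : ℂ) * Complex.exp (θ * Complex.I))‖ * ρ := by
        simp [circleMap]
      have hle : (∫ θ in (0:ℝ)..(2 * Real.pi), ‖A (circleMap 0 ρ θ)‖ * ρ * (ρ - 1)⁻¹)
          ≤ c * (ρ - 1)⁻¹ := by
        rw [hEq, hEq2]
        exact mul_le_mul_of_nonneg_right houter (inv_nonneg.2 hρ1.le)
      have hnn : (0:ℝ) ≤ ∫ θ in (0:ℝ)..(2 * Real.pi), ‖A (circleMap 0 ρ θ)‖ * ρ * (ρ - 1)⁻¹ :=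
        intervalIntegral.integral_nonneg h2π.le fun θ _ => by positivity
      calc (∫ θ in (0:ℝ)..(2 * Real.pi), ‖A (circleMap 0 ρ θ)‖ * ρ * (ρ - 1)⁻¹)
          ≤ c * (ρ - 1)⁻¹ := hle
        _ = c / (ρ - 1) := by rw [div_eq_mul_inv]
  -- bound the inner integral
  have hρi1 : (0:ℝ) < 1 - ρ⁻¹ := sub_pos.2 hρinv1
  have hD : (0:ℝ) < t * (1 - ρ⁻¹) := mul_pos ht0 hρi1
  have key2 : ‖∮ z in C(0, r), (z - w)⁻¹ • A z‖ ≤ c / (1 - ρ⁻¹) := by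
    have hmapr : ∀ θ : ℝ, circleMap 0 r θ ∈
        {z : ℂ | r ≤ ‖z‖ ∧ ‖z‖ ≤ ρ} := by
      intro θ
      have : ‖circleMap 0 r θ‖ = r := by
        simpa [abs_of_pos hr0] using norm_circleMap_zero r θ
      exact ⟨le_of_eq this.symm, this.symm ▸ hrρ⟩
    have hgcont : ContinuousOn (fun θ : ℝ => ‖A (circleMap 0 r θ)‖ * r * (t * (1 - ρ⁻¹))⁻¹)
        (Set.uIcc 0 (2 * Real.pi)) :=
      (((hcont.comp (continuous_circleMap 0 r).continuousOn
        fun θ _ => hmapr θ).norm.mul continuousOn_const).mul continuousOn_const)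
    have hgint : IntervalIntegrable (fun θ : ℝ => ‖A (circleMap 0 r θ)‖ * r * (t * (1 - ρ⁻¹))⁻¹)
        MeasureTheory.volume 0 (2 * Real.pi) := hgcont.intervalIntegrable
    rw [circleIntegral]
    refine le_trans (intervalIntegral.norm_integral_le_of_norm_le h2π.le
      (MeasureTheory.ae_of_all _ fun θ _ => ?_) hgint) ?_
    · have habsz : ‖circleMap 0 r θ‖ = r := by
        simpa [abs_of_pos hr0] using norm_circleMap_zero r θ
      have hd : t * (1 - ρ⁻¹) ≤ ‖circleMap 0 r θ - w‖ := by
        have h1 := norm_sub_norm_le w (circleMap 0 r θ)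
        rw [norm_sub_rev] at h1
        rw [habsz] at h1
        have heq : t * (1 - ρ⁻¹) = t - r := by rw [hr_def]; ring
        rw [heq]
        linarith
      have hinv : (‖circleMap 0 r θ - w‖)⁻¹ ≤ (t * (1 - ρ⁻¹))⁻¹ :=
        inv_anti₀ hD hd
      rw [norm_smul, norm_smul, deriv_circleMap]
      have h1 : ‖circleMap 0 r θ * Complex.I‖ = r := by
        simp [habsz]
      have h2 : ‖(circleMap 0 r θ - w)⁻¹‖ = (‖circleMap 0 r θ - w‖)⁻¹ := by
        simp
      rw [h1, h2]
      have hn : (0:ℝ) ≤ ‖A (circleMap 0 r θ)‖ := norm_nonneg _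
      calc r * ((‖circleMap 0 r θ - w‖)⁻¹ * ‖A (circleMap 0 r θ)‖)
          ≤ r * ((t * (1 - ρ⁻¹))⁻¹ * ‖A (circleMap 0 r θ)‖) := by
            exact mul_le_mul_of_nonneg_left (mul_le_mul_of_nonneg_right hinv hn) hr0.le
        _ = ‖A (circleMap 0 r θ)‖ * r * (t * (1 - ρ⁻¹))⁻¹ := by ring
    · have hEq : (∫ θ in (0:ℝ)..(2 * Real.pi), ‖A (circleMap 0 r θ)‖ * r * (t * (1 - ρ⁻¹))⁻¹)
          = (∫ θ in (0:ℝ)..(2 * Real.pi), ‖A (circleMap 0 r θ)‖ * r) * (t * (1 - ρ⁻¹))⁻¹ := by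
        rw [← intervalIntegral.integral_mul_const]
      have hEq2 : (∫ θ in (0:ℝ)..(2 * Real.pi), ‖A (circleMap 0 r θ)‖ * r)
          = ∫ θ in (0:ℝ)..(2 * Real.pi),
              ‖A (((ρ⁻¹ * t : ℝ) : ℂ) * Complex.exp (θ * Complex.I))‖ * (ρ⁻¹ * t) := by
        simp [circleMap, hr_def]
      have hle : (∫ θ in (0:ℝ)..(2 * Real.pi), ‖A (circleMap 0 r θ)‖ * r * (t * (1 - ρ⁻¹))⁻¹)
          ≤ (c * t) * (t * (1 - ρ⁻¹))⁻¹ := by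
        rw [hEq, hEq2]
        exact mul_le_mul_of_nonneg_right hinner (inv_nonneg.2 hD.le)
      have hnn : (0:ℝ) ≤ ∫ θ in (0:ℝ)..(2 * Real.pi),
          ‖A (circleMap 0 r θ)‖ * r * (t * (1 - ρ⁻¹))⁻¹ :=
        intervalIntegral.integral_nonneg h2π.le fun θ _ => by positivity
      calc (∫ θ in (0:ℝ)..(2 * Real.pi), ‖A (circleMap 0 r θ)‖ * r * (t * (1 - ρ⁻¹))⁻¹)
          ≤ (c * t) * (t * (1 - ρ⁻¹))⁻¹ := hle
        _ = c / (1 - ρ⁻¹) := by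
            field_simp
  -- put everything together
  have hnormsmul : ‖(2 * Real.pi * Complex.I) • A w‖ = 2 * Real.pi * ‖A w‖ := by
    rw [norm_smul]
    congr 1
    simp [abs_of_pos Real.pi_pos]
  have hfinal : 2 * Real.pi * ‖A w‖ ≤ c / (ρ - 1) + c / (1 - ρ⁻¹) := by
    rw [← hnormsmul, hkey]
    exact le_trans (norm_sub_le _ _) (add_le_add key1 key2)
  calc ‖A w‖ = (1 / (2 * Real.pi)) * (2 * Real.pi * ‖A w‖) := by
        field_simp
    _ ≤ (1 / (2 * Real.pi)) * (c / (ρ - 1) + c / (1 - ρ⁻¹)) :=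
        mul_le_mul_of_nonneg_left hfinal (by positivity)
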